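/- A metric space (X,ρ) is complete if and only if for every proper, lower semicontinuous, bounded from below function f : X → ℝ ∪ {+∞} and every ε > 0 there exists y_ε ∈ X such that (1) f(y_ε) ≤ inf f(X) + ε, and (2) f(y_ε) < f(y) + ε·ρ(y, y_ε) for all y ∈ X \ {y_ε}. -/

import Mathlib

open Filter Topology

private theorem weak_ekeland_of_complete {X : Type*} [MetricSpace X] [CompleteSpace X]
    (f : X → EReal) (hproper : ∃ x, f x ≠ ⊤) (hlsc : LowerSemicontinuous f)
    (c : ℝ) (hc : ∀ x, (c : EReal) ≤ f x) (ε : ℝ) (hε : 0 < ε) :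
    ∃ yε : X, f yε ≤ (⨅ x, f x) + (ε : EReal) ∧
      ∀ y : X, y ≠ yε → f yε < f y + ((ε * dist y yε : ℝ) : EReal) := by
  have hne_bot : ∀ x, f x ≠ ⊥ := fun x => ((EReal.bot_lt_coe c).trans_le (hc x)).ne'
  set m : EReal := ⨅ x, f x with hm
  have hmb : (c : EReal) ≤ m := le_iInf hc
  have hm_bot : m ≠ ⊥ := ((EReal.bot_lt_coe c).trans_le hmb).ne'
  obtain ⟨x', hx'⟩ := hproper
  have hm_top : m ≠ ⊤ := ((iInf_le _ x').trans_lt (lt_top_iff_ne_top.mpr hx')).ne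
  -- key selection step
  have key : ∀ (δ : ℝ), 0 < δ → ∀ a : X, f a ≠ ⊤ →
      ∃ b : X, f b ≠ ⊤ ∧ f b + ((ε * dist b a : ℝ) : EReal) ≤ f a ∧
        ∀ z : X, f z + ((ε * dist z a : ℝ) : EReal) ≤ f a → f b ≤ f z + (δ : EReal) := by
    intro δ hδ a ha
    set S := {z : X // f z + ((ε * dist z a : ℝ) : EReal) ≤ f a} with hS
    have haS : f a + ((ε * dist a a : ℝ) : EReal) ≤ f a := by
      simp [dist_self]
    set μ : EReal := ⨅ z : S, f z.1 with hμ
    have hμ_le : μ ≤ f a := iInf_le (fun z : S => f z.1) ⟨a, haS⟩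
    have hμc : (c : EReal) ≤ μ := le_iInf fun z => hc z.1
    have hμ_top : μ ≠ ⊤ := (hμ_le.trans_lt (lt_top_iff_ne_top.mpr ha)).ne
    have hμ_bot : μ ≠ ⊥ := ((EReal.bot_lt_coe c).trans_le hμc).ne'
    have hlt : μ < μ + (δ : EReal) := by
      rw [← EReal.coe_toReal hμ_top hμ_bot, ← EReal.coe_add]
      exact_mod_cast lt_add_of_pos_right _ hδ
    obtain ⟨b, hbμ⟩ := iInf_lt_iff.mp hlt
    have hb_top : f b.1 ≠ ⊤ := by
      have h1 : f b.1 ≤ f b.1 + ((ε * dist b.1 a : ℝ) : EReal) :=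
        le_add_of_nonneg_right (by exact_mod_cast mul_nonneg hε.le dist_nonneg)
      exact ((h1.trans b.2).trans_lt (lt_top_iff_ne_top.mpr ha)).ne
    refine ⟨b.1, hb_top, b.2, fun z hz => ?_⟩
    have : μ ≤ f z := iInf_le (fun z : S => f z.1) ⟨z, hz⟩
    exact hbμ.le.trans (add_le_add_left this _)
  -- starting point
  have hmε_top : m + (ε : EReal) ≠ ⊤ := by
    rw [← EReal.coe_toReal hm_top hm_bot, ← EReal.coe_add]
    exact EReal.coe_ne_top _
  have hmlt : m < m + (ε : EReal) := by
    rw [← EReal.coe_toReal hm_top hm_bot, ← EReal.coe_add]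
    exact_mod_cast lt_add_of_pos_right _ hε
  obtain ⟨x₀, hx₀⟩ := iInf_lt_iff.mp hmlt
  have hx₀top : f x₀ ≠ ⊤ := (hx₀.trans (lt_top_iff_ne_top.mpr hmε_top)).ne
  -- the recursive sequence
  have step : ∀ (n : ℕ) (a : {a : X // f a ≠ ⊤}), ∃ b : {a : X // f a ≠ ⊤},
      f b.1 + ((ε * dist b.1 a.1 : ℝ) : EReal) ≤ f a.1 ∧
      ∀ z : X, f z + ((ε * dist z a.1 : ℝ) : EReal) ≤ f a.1 →
        f b.1 ≤ f z + (((1/2 : ℝ)^n : ℝ) : EReal) := by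
    intro n a
    obtain ⟨b, h1, h2, h3⟩ := key ((1/2 : ℝ)^n) (by positivity) a.1 a.2
    exact ⟨⟨b, h1⟩, h2, h3⟩
  choose g hg1 hg2 using step
  let u : ℕ → {a : X // f a ≠ ⊤} := fun n => Nat.rec ⟨x₀, hx₀top⟩ (fun n a => g n a) n
  have hu : ∀ n, u (n+1) = g n (u n) := fun n => rfl
  have hu0 : (u 0).1 = x₀ := rfl
  -- chain inequality
  have chain : ∀ n m, n ≤ m →
      f (u m).1 + ((ε * dist (u m).1 (u n).1 : ℝ) : EReal) ≤ f (u n).1 := by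
    intro n m h
    induction m, h using Nat.le_induction with
    | base => simp [dist_self]
    | succ m hm ih =>
      have h1 := hg1 m (u m)
      rw [← hu m] at h1
      calc f (u (m+1)).1 + ((ε * dist (u (m+1)).1 (u n).1 : ℝ) : EReal)
          ≤ f (u (m+1)).1 + ((ε * (dist (u (m+1)).1 (u m).1 + dist (u m).1 (u n).1) : ℝ) : EReal) := by
            refine add_le_add_right ?_ _
            exact_mod_cast mul_le_mul_of_nonneg_left (dist_triangle _ _ _) hε.le
        _ = (f (u (m+1)).1 + ((ε * dist (u (m+1)).1 (u m).1 : ℝ) : EReal))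
              + ((ε * dist (u m).1 (u n).1 : ℝ) : EReal) := by
            rw [mul_add, EReal.coe_add, add_assoc]
        _ ≤ f (u m).1 + ((ε * dist (u m).1 (u n).1 : ℝ) : EReal) := add_le_add_left h1 _
        _ ≤ f (u n).1 := ih
  -- real values
  set F : ℕ → ℝ := fun n => (f (u n).1).toReal with hF
  have hFe : ∀ n, f (u n).1 = ((F n : ℝ) : EReal) :=
    fun n => (EReal.coe_toReal (u n).2 (hne_bot _)).symm
  have chainR : ∀ n m, n ≤ m → F m + ε * dist (u m).1 (u n).1 ≤ F n := by
    intro n m h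
    have h1 := chain n m h
    rw [hFe m, hFe n, ← EReal.coe_add] at h1
    exact_mod_cast h1
  have hFc : ∀ n, c ≤ F n := fun n => by
    have h1 := hc (u n).1
    rw [hFe n] at h1
    exact_mod_cast h1
  have hFanti : Antitone F := antitone_nat_of_succ_le fun n => by
    have h1 := chainR n (n+1) (Nat.le_succ n)
    nlinarith [dist_nonneg (x := (u (n+1)).1) (y := (u n).1), hε.le]
  have hFtend : Tendsto F atTop (𝓝 (⨅ n, F n)) :=
    tendsto_atTop_ciInf hFanti ⟨c, fun x ⟨n, hn⟩ => hn ▸ hFc n⟩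
  set L : ℝ := ⨅ n, F n with hL
  have hFcauchy : CauchySeq F := hFtend.cauchySeq
  -- points are Cauchy
  have hucauchy : CauchySeq (fun n => (u n).1) := by
    rw [Metric.cauchySeq_iff]
    intro η hη
    obtain ⟨N, hN⟩ := Metric.cauchySeq_iff.mp hFcauchy (ε * η) (by positivity)
    refine ⟨N, fun p hp q hq => ?_⟩
    rcases le_total q p with hpq | hpq
    · have h1 := chainR q p hpq
      have h2 := hN p hp q hq
      rw [Real.dist_eq] at h2
      have h3 : F q - F p < ε * η := lt_of_abs_lt (by rwa [abs_sub_comm] at h2)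
      have h4 : ε * dist (u p).1 (u q).1 < ε * η := by linarith
      exact lt_of_mul_lt_mul_left h4 hε.le
    · have h1 := chainR p q hpq
      have h2 := hN q hq p hp
      rw [Real.dist_eq] at h2
      have h3 : F p - F q < ε * η := lt_of_abs_lt (by rwa [abs_sub_comm] at h2)
      have h4 : ε * dist (u q).1 (u p).1 < ε * η := by linarith
      rw [dist_comm]
      exact lt_of_mul_lt_mul_left h4 hε.le
  obtain ⟨y, hy⟩ := cauchySeq_tendsto_of_complete hucauchy
  -- f y ≤ L
  have hfyL : f y ≤ ((L : ℝ) : EReal) := by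
    by_contra hcon
    push_neg at hcon
    obtain ⟨b, hb1, hb2⟩ := exists_between hcon
    have hev : ∀ᶠ n in atTop, b < f (u n).1 := hy.eventually (hlsc y b hb2)
    have htd : Tendsto (fun n => ((F n : ℝ) : EReal)) atTop (𝓝 ((L : ℝ) : EReal)) :=
      (continuous_coe_real_ereal.tendsto _).comp hFtend
    have hb3 : b ≤ ((L : ℝ) : EReal) :=
      ge_of_tendsto htd (hev.mono fun n h => by rw [← hFe n]; exact h.le)
    exact absurd hb1 hb3.not_gt
  have hfy_top : f y ≠ ⊤ := (hfyL.trans_lt (EReal.coe_lt_top L)).ne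
  set fy : ℝ := (f y).toReal with hfy
  have hfye : f y = ((fy : ℝ) : EReal) := (EReal.coe_toReal hfy_top (hne_bot y)).symm
  have hfyL' : fy ≤ L := by
    rw [hfye] at hfyL; exact_mod_cast hfyL
  -- y ≼ u n (real form)
  have hyn : ∀ n, fy + ε * dist y (u n).1 ≤ F n := by
    intro n
    have hlim : Tendsto (fun m => F m + ε * dist (u m).1 (u n).1) atTop
        (𝓝 (L + ε * dist y (u n).1)) :=
      hFtend.add ((hy.dist tendsto_const_nhds).const_mul ε)
    have h1 : L + ε * dist y (u n).1 ≤ F n :=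
      le_of_tendsto hlim (eventually_atTop.mpr ⟨n, fun m hm => chainR n m hm⟩)
    linarith
  have hynE : ∀ n, f y + ((ε * dist y (u n).1 : ℝ) : EReal) ≤ f (u n).1 := by
    intro n
    rw [hfye, hFe n, ← EReal.coe_add]
    exact_mod_cast hyn n
  refine ⟨y, ?_, ?_⟩
  · -- condition (1)
    have h0 := hynE 0
    have h1 : f y ≤ f (u 0).1 :=
      le_trans (le_add_of_nonneg_right (by exact_mod_cast mul_nonneg hε.le dist_nonneg)) h0
    rw [hu0] at h1
    exact h1.trans hx₀.le
  · -- condition (2)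
    intro z hz
    by_contra hcon
    push_neg at hcon
    have hz_top : f z ≠ ⊤ := by
      have h1 : f z ≤ f y :=
        le_trans (le_add_of_nonneg_right (by exact_mod_cast mul_nonneg hε.le dist_nonneg)) hcon
      exact (h1.trans_lt (lt_top_iff_ne_top.mpr hfy_top)).ne
    set fz : ℝ := (f z).toReal with hfz
    have hfze : f z = ((fz : ℝ) : EReal) := (EReal.coe_toReal hz_top (hne_bot z)).symm
    have hR : fz + ε * dist z y ≤ fy := by
      rw [hfze, hfye, ← EReal.coe_add] at hcon
      exact_mod_cast hcon
    have hzS : ∀ n, f z + ((ε * dist z (u n).1 : ℝ) : EReal) ≤ f (u n).1 := by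
      intro n
      rw [hfze, hFe n, ← EReal.coe_add]
      have h1 := hyn n
      have h2 := dist_triangle z y (u n).1
      have h3 : fz + ε * dist z (u n).1 ≤ F n := by nlinarith [hε.le]
      exact_mod_cast h3
    have hstep : ∀ n, F (n+1) ≤ fz + (1/2 : ℝ)^n := by
      intro n
      have h1 := hg2 n (u n) z (hzS n)
      rw [← hu n] at h1
      rw [hFe (n+1), hfze, ← EReal.coe_add] at h1
      exact_mod_cast h1
    have hyn1 : ∀ n, fy ≤ F (n+1) := fun n => by
      have h1 := hyn (n+1)
      nlinarith [mul_nonneg hε.le (dist_nonneg (x := y) (y := (u (n+1)).1))]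
    have hd : ∀ n : ℕ, ε * dist z y ≤ (1/2 : ℝ)^n := fun n => by
      have h1 := hstep n; have h2 := hyn1 n; linarith
    have h5 : ε * dist z y ≤ 0 :=
      ge_of_tendsto' (tendsto_pow_atTop_nhds_zero_of_lt_one (by norm_num) (by norm_num)) hd
    have h6 : dist z y ≤ 0 := by nlinarith [dist_nonneg (x := z) (y := y)]
    exact hz (by simpa using dist_le_zero.mp h6)

private theorem complete_of_weak_ekeland {X : Type*} [MetricSpace X]
    (H : ∀ f : X → EReal, (∃ x, f x ≠ ⊤) → LowerSemicontinuous f →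
      (∃ c : ℝ, ∀ x, (c : EReal) ≤ f x) → ∀ ε : ℝ, 0 < ε →
      ∃ yε : X, f yε ≤ (⨅ x, f x) + (ε : EReal) ∧
        ∀ y : X, y ≠ yε → f yε < f y + ((ε * dist y yε : ℝ) : EReal)) :
    CompleteSpace X := by
  apply Metric.complete_of_cauchySeq_tendsto
  intro v hv
  have hex : ∀ x : X, ∃ l : ℝ, Tendsto (fun n => dist x (v n)) atTop (𝓝 l) := by
    intro x
    apply cauchySeq_tendsto_of_complete
    rw [Metric.cauchySeq_iff]
    intro η hη
    obtain ⟨N, hN⟩ := Metric.cauchySeq_iff.mp hv η hη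
    refine ⟨N, fun p hp q hq => ?_⟩
    rw [Real.dist_eq]
    calc |dist x (v p) - dist x (v q)| ≤ dist (v p) (v q) := by
          simpa [dist_comm] using abs_dist_sub_le (v p) (v q) x
      _ < η := hN p hp q hq
  choose φ hφ using hex
  have hφ0 : ∀ x, 0 ≤ φ x := fun x => ge_of_tendsto' (hφ x) fun n => dist_nonneg
  have hlip : ∀ x y : X, φ x ≤ φ y + dist x y := fun x y =>
    le_of_tendsto_of_tendsto' (hφ x) ((hφ y).add tendsto_const_nhds) fun n => by
      have := dist_triangle x y (v n); linarith
  have hcont : Continuous φ := by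
    refine LipschitzWith.continuous (K := 1) (LipschitzWith.of_dist_le_mul fun x y => ?_)
    rw [Real.dist_eq, NNReal.coe_one, one_mul, abs_sub_le_iff]
    have h1 := hlip x y
    have h2 := hlip y x
    have h3 := dist_comm y x
    constructor <;> linarith
  have hφv : Tendsto (fun n => φ (v n)) atTop (𝓝 0) := by
    rw [Metric.tendsto_atTop]
    intro η hη
    obtain ⟨N, hN⟩ := Metric.cauchySeq_iff.mp hv (η/2) (by linarith)
    refine ⟨N, fun n hn => ?_⟩
    have hle : φ (v n) ≤ η/2 :=
      le_of_tendsto (hφ (v n)) (eventually_atTop.mpr ⟨N, fun m hm => (hN n hn m hm).le⟩)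
    rw [Real.dist_eq, sub_zero, abs_of_nonneg (hφ0 _)]
    linarith
  obtain ⟨y, -, h2⟩ := H (fun x => ((φ x : ℝ) : EReal)) ⟨v 0, EReal.coe_ne_top _⟩
    ((continuous_coe_real_ereal.comp hcont).lowerSemicontinuous)
    ⟨0, fun x => by simpa using EReal.coe_le_coe_iff.mpr (hφ0 x)⟩ (1/2) (by norm_num)
  have hdist : ∀ n, dist (v n) y ≤ φ (v n) + φ y := fun n =>
    ge_of_tendsto ((hφ (v n)).add (hφ y)) (Eventually.of_forall fun m => by
      have h1 := dist_triangle (v n) (v m) y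
      have h3 := dist_comm (v m) y
      linarith)
  have hkey : ∀ n, φ y ≤ 3 * φ (v n) := by
    intro n
    by_cases hne : v n = y
    · rw [hne]; linarith [hφ0 y]
    · have h3 := h2 (v n) hne
      rw [← EReal.coe_add] at h3
      have hR : φ y < φ (v n) + 1/2 * dist (v n) y := by exact_mod_cast h3
      have h4 := hdist n
      linarith
  have hy0 : φ y ≤ 0 := by
    have h5 : Tendsto (fun n => 3 * φ (v n)) atTop (𝓝 0) := by
      simpa using hφv.const_mul 3
    exact ge_of_tendsto h5 (Eventually.of_forall hkey)
  have hφy : φ y = 0 := le_antisymm hy0 (hφ0 y)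
  refine ⟨y, ?_⟩
  rw [tendsto_iff_dist_tendsto_zero]
  simpa [hφy, dist_comm] using hφ y

/-- Weston–Sullivan: a metric space `(X,ρ)` is complete if and only if for every proper,
lower semicontinuous, bounded below function `f : X → ℝ ∪ {+∞}` and every `ε > 0` there
exists `y_ε ∈ X` with `f(y_ε) ≤ inf f(X) + ε` and `f(y_ε) < f(y) + ε·ρ(y,y_ε)` for all
`y ≠ y_ε` (the weak Ekeland variational principle). -/
theorem complete_iff_weak_ekeland {X : Type*} [MetricSpace X] :
    CompleteSpace X ↔
      ∀ f : X → EReal,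
        (∃ x, f x ≠ ⊤) →
        LowerSemicontinuous f →
        (∃ c : ℝ, ∀ x, (c : EReal) ≤ f x) →
        ∀ ε : ℝ, 0 < ε →
          ∃ yε : X,
            f yε ≤ (⨅ x, f x) + (ε : EReal) ∧
            ∀ y : X, y ≠ yε → f yε < f y + ((ε * dist y yε : ℝ) : EReal) := by
  constructor
  · intro hcomp f hp hl hb ε hε
    obtain ⟨c, hc⟩ := hb
    exact weak_ekeland_of_complete f hp hl c hc ε hε
  · exact complete_of_weak_ekeland
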